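/- Let $\mathcal{P}_2$ be the set of MTP2 probability distributions on $\{-1,1\}^d$ and let $U = \{x_1,\ldots,x_n\}$ be a nonempty finite sample with likelihood $L(p) = \prod_{i=1}^n p(x_i)$. Then the likelihood $L$ attains its maximum over $\mathcal{P}_2$ at a unique point $\hat{p}$. -/
import Mathlib

def IsProb {X : Type*} [Fintype X] (p : X → ℝ) : Prop :=
  (∀ x, 0 ≤ p x) ∧ ∑ x, p x = 1

def MTP2 {d : ℕ} (p : (Fin d → Bool) → ℝ) : Prop :=
  ∀ x y, p x * p y ≤ p (x ⊔ y) * p (x ⊓ y)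

lemma amgm {a b : ℝ} (ha : 0 ≤ a) (hb : 0 ≤ b) : Real.sqrt (a*b) ≤ (a+b)/2 := by
  rw [show (a+b)/2 = Real.sqrt (((a+b)/2)^2) by rw [Real.sqrt_sq (by positivity)]]
  apply Real.sqrt_le_sqrt
  nlinarith [sq_nonneg (a-b)]

lemma amgm_eq {a b : ℝ} (ha : 0 ≤ a) (hb : 0 ≤ b) (h : Real.sqrt (a*b) = (a+b)/2) :
    a = b := by
  have h2 := Real.sq_sqrt (mul_nonneg ha hb)
  rw [h] at h2
  nlinarith [sq_nonneg (a-b)]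

lemma sqrt_prod' {ι : Type*} (s : Finset ι) (f : ι → ℝ) (h : ∀ i, 0 ≤ f i) :
    ∏ i ∈ s, Real.sqrt (f i) = Real.sqrt (∏ i ∈ s, f i) := by
  induction s using Finset.cons_induction with
  | empty => simp
  | cons a s ha ih => rw [Finset.prod_cons, Finset.prod_cons, ih, Real.sqrt_mul (h a)]

theorem stmt3 {d n : ℕ} (hn : 0 < n) (x : Fin n → (Fin d → Bool)) :
    ∃! p : (Fin d → Bool) → ℝ, (IsProb p ∧ MTP2 p) ∧
      ∀ q : (Fin d → Bool) → ℝ, IsProb q → MTP2 q →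
        (∏ i, q (x i)) ≤ ∏ i, p (x i) := by
  classical
  set K : Set ((Fin d → Bool) → ℝ) := {p | IsProb p ∧ MTP2 p} with hKdef
  -- uniform distribution
  set u : (Fin d → Bool) → ℝ := fun _ => ((2:ℝ)^d)⁻¹ with hudef
  have hcard : (Fintype.card (Fin d → Bool) : ℝ) = 2^d := by
    simp [Fintype.card_fun]
  have huK : u ∈ K := by
    refine ⟨⟨fun _ => by positivity, ?_⟩, fun a b => le_refl _⟩
    rw [Finset.sum_const, Finset.card_univ, nsmul_eq_mul, hcard]
    rw [mul_inv_cancel₀ (by positivity)]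
  -- K is compact
  have hsub : K ⊆ Set.Icc (0 : (Fin d → Bool) → ℝ) 1 := by
    rintro p ⟨⟨hp0, hp1⟩, -⟩
    refine ⟨fun z => hp0 z, fun z => ?_⟩
    calc p z ≤ ∑ w, p w := Finset.single_le_sum (fun w _ => hp0 w) (Finset.mem_univ z)
    _ = 1 := hp1
  have hclosed : IsClosed K := by
    have h1 : IsClosed {p : (Fin d → Bool) → ℝ | ∀ z, 0 ≤ p z} := by
      rw [Set.setOf_forall]
      exact isClosed_iInter fun z => isClosed_le continuous_const (continuous_apply z)
    have h2 : IsClosed {p : (Fin d → Bool) → ℝ | ∑ z, p z = 1} :=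
      isClosed_eq (continuous_finset_sum _ fun z _ => continuous_apply z) continuous_const
    have h3 : IsClosed {p : (Fin d → Bool) → ℝ | MTP2 p} := by
      have : {p : (Fin d → Bool) → ℝ | MTP2 p} =
          ⋂ a, ⋂ b, {p | p a * p b ≤ p (a ⊔ b) * p (a ⊓ b)} := by
        ext p; simp [MTP2]
      rw [this]
      exact isClosed_iInter fun a => isClosed_iInter fun b =>
        isClosed_le ((continuous_apply a).mul (continuous_apply b))
          ((continuous_apply (a ⊔ b)).mul (continuous_apply (a ⊓ b)))
    have : K = ({p : (Fin d → Bool) → ℝ | ∀ z, 0 ≤ p z} ∩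
        {p | ∑ z, p z = 1}) ∩ {p | MTP2 p} := by
      ext p; simp [hKdef, IsProb, and_assoc]
    rw [this]
    exact ((h1.inter h2).inter h3)
  have hKcomp : IsCompact K := isCompact_Icc.of_isClosed_subset hclosed hsub
  -- continuous likelihood
  have hLcont : Continuous (fun p : (Fin d → Bool) → ℝ => ∏ i, p (x i)) :=
    continuous_finset_prod _ fun i _ => continuous_apply (x i)
  obtain ⟨p, hpK, hpmax⟩ := hKcomp.exists_isMaxOn ⟨u, huK⟩ hLcont.continuousOn
  have hpmax' : ∀ q : (Fin d → Bool) → ℝ, IsProb q → MTP2 q →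
      (∏ i, q (x i)) ≤ ∏ i, p (x i) := fun q h1 h2 => hpmax ⟨h1, h2⟩
  refine ⟨p, ⟨hpK, hpmax'⟩, ?_⟩
  rintro q ⟨⟨hq1, hq2⟩, hqmax⟩
  -- q is also a maximizer with the same value M
  have hM : ∏ i, q (x i) = ∏ i, p (x i) :=
    le_antisymm (hpmax' q hq1 hq2) (hqmax p hpK.1 hpK.2)
  have hMpos : 0 < ∏ i, p (x i) := by
    have hu : (0:ℝ) < ∏ i, u (x i) := by
      rw [Finset.prod_const]
      positivity
    exact lt_of_lt_of_le hu (hpmax' u huK.1 huK.2)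
  -- geometric mean argument
  set c : ℝ := ∑ z, Real.sqrt (q z * p z) with hcdef
  have hterm : ∀ z, 0 ≤ q z * p z := fun z => mul_nonneg (hq1.1 z) (hpK.1.1 z)
  have hc1 : c ≤ 1 := by
    calc c ≤ ∑ z, (q z + p z)/2 :=
          Finset.sum_le_sum fun z _ => amgm (hq1.1 z) (hpK.1.1 z)
    _ = (∑ z, q z + ∑ z, p z)/2 := by rw [← Finset.sum_add_distrib, Finset.sum_div]
    _ = 1 := by rw [hq1.2, hpK.1.2]; norm_num
  -- positivity of each likelihood factor
  have hqxi : ∀ i : Fin n, 0 < q (x i) := by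
    intro i
    have hne : ∏ j, q (x j) ≠ 0 := by rw [hM]; exact ne_of_gt hMpos
    have := (Finset.prod_ne_zero_iff.mp hne) i (Finset.mem_univ i)
    exact lt_of_le_of_ne (hq1.1 _) (Ne.symm this)
  have hpxi : ∀ i : Fin n, 0 < p (x i) := by
    intro i
    have hne : ∏ j, p (x j) ≠ 0 := ne_of_gt hMpos
    have := (Finset.prod_ne_zero_iff.mp hne) i (Finset.mem_univ i)
    exact lt_of_le_of_ne (hpK.1.1 _) (Ne.symm this)
  have i0 : Fin n := ⟨0, hn⟩
  have hcpos : 0 < c := by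
    have h1 : 0 < Real.sqrt (q (x i0) * p (x i0)) :=
      Real.sqrt_pos.mpr (mul_pos (hqxi i0) (hpxi i0))
    exact lt_of_lt_of_le h1
      (Finset.single_le_sum (f := fun z => Real.sqrt (q z * p z))
        (fun z _ => Real.sqrt_nonneg _) (Finset.mem_univ (x i0)))
  -- the normalized geometric mean
  set s : (Fin d → Bool) → ℝ := fun z => Real.sqrt (q z * p z) / c with hsdef
  have hsprob : IsProb s := by
    constructor
    · intro z; exact div_nonneg (Real.sqrt_nonneg _) hcpos.le
    · rw [← Finset.sum_div]
      exact div_self (ne_of_gt hcpos)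
  have hsmtp : MTP2 s := by
    intro a b
    have key : Real.sqrt (q a * p a) * Real.sqrt (q b * p b) ≤
        Real.sqrt (q (a ⊔ b) * p (a ⊔ b)) * Real.sqrt (q (a ⊓ b) * p (a ⊓ b)) := by
      rw [← Real.sqrt_mul (hterm a), ← Real.sqrt_mul (hterm (a ⊔ b))]
      apply Real.sqrt_le_sqrt
      have h1 := hq2 a b
      have h2 := hpK.2 a b
      calc q a * p a * (q b * p b) = (q a * q b) * (p a * p b) := by ring
      _ ≤ (q (a ⊔ b) * q (a ⊓ b)) * (p (a ⊔ b) * p (a ⊓ b)) := by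
          apply mul_le_mul h1 h2 (mul_nonneg (hpK.1.1 a) (hpK.1.1 b))
            (mul_nonneg (hq1.1 _) (hq1.1 _))
      _ = q (a ⊔ b) * p (a ⊔ b) * (q (a ⊓ b) * p (a ⊓ b)) := by ring
    simp only [hsdef]
    rw [div_mul_div_comm, div_mul_div_comm]
    apply div_le_div_of_nonneg_right ?_ (by positivity)
    · exact key
  -- likelihood of s
  have hLs : ∏ i, s (x i) = (∏ i, p (x i)) / c^n := by
    simp only [hsdef]
    rw [Finset.prod_div_distrib, Finset.prod_const, Finset.card_univ, Fintype.card_fin]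
    congr 1
    rw [sqrt_prod' _ _ (fun i => hterm (x i)), Finset.prod_mul_distrib, hM]
    exact Real.sqrt_mul_self hMpos.le
  have hLs_le := hpmax' s hsprob hsmtp
  rw [hLs] at hLs_le
  have hcn : 1 ≤ c^n := by
    rw [div_le_iff₀ (by positivity)] at hLs_le
    nlinarith
  have hc_ge : 1 ≤ c := (one_le_pow_iff_of_nonneg hcpos.le hn.ne').mp hcn
  have hceq : c = 1 := le_antisymm hc1 hc_ge
  -- equality in AM-GM termwise
  have hsum_eq : ∑ z, Real.sqrt (q z * p z) = ∑ z, (q z + p z)/2 := by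
    have hrhs : ∑ z, (q z + p z)/2 = 1 := by
      rw [← Finset.sum_div, Finset.sum_add_distrib, hq1.2, hpK.1.2]
      norm_num
    rw [hrhs, ← hcdef, hceq]
  have heach := (Finset.sum_eq_sum_iff_of_le
    (fun z _ => amgm (hq1.1 z) (hpK.1.1 z))).mp hsum_eq
  funext z
  exact amgm_eq (hq1.1 z) (hpK.1.1 z) (heach z (Finset.mem_univ z))
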